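/- Let k be a commutative ring, λ ∈ k, and A an associative unital k-algebra. (1) The k-linear map ξ : D → C(λ) determined by ξ(e) = e and ξ(d) = λ·d + e is a morphism of k-coalgebras, i.e. ε_{C(λ)}∘ξ = ε_D and δ_{C(λ)}∘ξ = (ξ⊗ξ)∘δ_D. (2) The k-module isomorphism Hom_k(C(λ), A) → A², f ↦ (f(e), f(d)), carries the convolution product to the length-2 λ-Hurwitz product: the convolution unit maps to (1, 0) and f ∗ g maps to (f(e)·g(e), f(d)·g(e) + f(e)·g(d) + λ·f(d)·g(d)). (3) The k-module isomorphism Hom_k(D, A) → A², f ↦ (f(e), f(d)), carries the convolution product to the pointwise product with unit (1,1). (4) Under these identifications, precomposition with ξ is the map γ₂ : A² → A² given by γ₂(a₀, a₁) = (a₀, a₀ + λ·a₁). -/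
import Mathlib


open TensorProduct

/-- The basis vector `e` of the free module `k × k`. -/
def eC (k : Type*) [CommRing k] : k × k := (1, 0)

/-- The basis vector `d` of the free module `k × k`. -/
def dC (k : Type*) [CommRing k] : k × k := (0, 1)

/-- The counit of `C(λ)`: `ε(e) = 1`, `ε(d) = 0`. -/
def epsC (k : Type*) [CommRing k] : (k × k) →ₗ[k] k := LinearMap.fst k k k

/-- The comultiplication of `C(λ)`: `δ(e) = e⊗e`, `δ(d) = d⊗e + e⊗d + λ·(d⊗d)`. -/
noncomputable def delC (k : Type*) [CommRing k] (lam : k) :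
    (k × k) →ₗ[k] (k × k) ⊗[k] (k × k) :=
  (LinearMap.fst k k k).smulRight (eC k ⊗ₜ[k] eC k) +
    (LinearMap.snd k k k).smulRight
      (dC k ⊗ₜ[k] eC k + eC k ⊗ₜ[k] dC k + lam • (dC k ⊗ₜ[k] dC k))

/-- The counit of the set-like coalgebra `D`: `ε(e) = ε(d) = 1`. -/
noncomputable def epsD (k : Type*) [CommRing k] : (k × k) →ₗ[k] k :=
  LinearMap.fst k k k + LinearMap.snd k k k

/-- The comultiplication of the set-like coalgebra `D`: `δ(e) = e⊗e`, `δ(d) = d⊗d`. -/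
noncomputable def delD (k : Type*) [CommRing k] :
    (k × k) →ₗ[k] (k × k) ⊗[k] (k × k) :=
  (LinearMap.fst k k k).smulRight (eC k ⊗ₜ[k] eC k) +
    (LinearMap.snd k k k).smulRight (dC k ⊗ₜ[k] dC k)

/-- The `k`-linear map `ξ : D → C(λ)` with `ξ(e) = e` and `ξ(d) = λ·d + e`. -/
noncomputable def xiL (k : Type*) [CommRing k] (lam : k) : (k × k) →ₗ[k] (k × k) :=
  (LinearMap.fst k k k).smulRight (eC k) +
    (LinearMap.snd k k k).smulRight (lam • dC k + eC k)

/-- The convolution product on `Hom_k(C, A)` associated to a comultiplication `δ`: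
`f ∗ g = μ_A ∘ (f ⊗ g) ∘ δ`. -/
noncomputable def convP {k A : Type*} [CommRing k] [Ring A] [Algebra k A]
    (del : (k × k) →ₗ[k] (k × k) ⊗[k] (k × k)) (f g : (k × k) →ₗ[k] A) :
    (k × k) →ₗ[k] A :=
  LinearMap.mul' k A ∘ₗ TensorProduct.map f g ∘ₗ del


private lemma pair_decomp {k : Type*} [CommRing k] (a b : k) :
    ((a, b) : k × k) = a • ((1:k), (0:k)) + b • ((0:k), (1:k)) := by
  simp [Prod.ext_iff]

/-- (1) `ξ` is a morphism of `k`-coalgebras from `D` to `C(λ)`.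
(2) Under `f ↦ (f(e), f(d))`, convolution on `Hom_k(C(λ), A)` becomes the length-2
`λ`-Hurwitz product, with unit `(1, 0)`.  (3) Under the same identification, convolution
on `Hom_k(D, A)` becomes the pointwise product, with unit `(1, 1)`.  (4) Under these
identifications, precomposition with `ξ` is `γ₂(a₀, a₁) = (a₀, a₀ + λ·a₁)`. -/
theorem stmt17 {k A : Type*} [CommRing k] [Ring A] [Algebra k A] (lam : k) :
    -- (1) ξ is a coalgebra morphism
    (∀ v : k × k, epsC k (xiL k lam v) = epsD k v) ∧
    (∀ v : k × k,
      delC k lam (xiL k lam v) =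
        TensorProduct.map (xiL k lam) (xiL k lam) (delD k v)) ∧
    -- (2) convolution for C(λ) is the length-2 λ-Hurwitz product
    (algebraMap k A (epsC k (eC k)) = 1) ∧
    (algebraMap k A (epsC k (dC k)) = 0) ∧
    (∀ f g : (k × k) →ₗ[k] A,
      convP (delC k lam) f g (eC k) = f (eC k) * g (eC k)) ∧
    (∀ f g : (k × k) →ₗ[k] A,
      convP (delC k lam) f g (dC k) =
        f (dC k) * g (eC k) + f (eC k) * g (dC k) + lam • (f (dC k) * g (dC k))) ∧
    -- (3) convolution for D is the pointwise product
    (algebraMap k A (epsD k (eC k)) = 1) ∧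
    (algebraMap k A (epsD k (dC k)) = 1) ∧
    (∀ f g : (k × k) →ₗ[k] A,
      convP (delD k) f g (eC k) = f (eC k) * g (eC k)) ∧
    (∀ f g : (k × k) →ₗ[k] A,
      convP (delD k) f g (dC k) = f (dC k) * g (dC k)) ∧
    -- (4) precomposition with ξ is γ₂
    (∀ f : (k × k) →ₗ[k] A,
      (f ∘ₗ xiL k lam) (eC k) = f (eC k) ∧
      (f ∘ₗ xiL k lam) (dC k) = f (eC k) + lam • f (dC k)) := by

  refine ⟨?_, ?_, ?_, ?_, ?_, ?_, ?_, ?_, ?_, ?_, ?_⟩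
  · intro v
    simp [epsC, epsD, xiL, eC, dC, mul_comm]
  · intro v
    simp only [delC, delD, xiL, eC, dC, LinearMap.add_apply, LinearMap.smulRight_apply,
      LinearMap.fst_apply, LinearMap.snd_apply, map_add, map_smul, TensorProduct.map_tmul,
      LinearMap.coe_mk, smul_add, TensorProduct.tmul_add, TensorProduct.add_tmul,
      TensorProduct.smul_tmul', TensorProduct.tmul_smul, smul_smul,
      mul_zero, zero_mul, mul_one, one_mul, zero_smul, add_zero, zero_add]
    ring_nf
  · simp [epsC, eC]
  · simp [epsC, dC]
  · intro f g
    simp [convP, delC, eC, dC]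
  · intro f g
    simp [convP, delC, eC, dC, mul_add, add_mul, smul_smul, mul_comm]
  · simp [epsD, eC]
  · simp [epsD, dC]
  · intro f g
    simp [convP, delD, eC, dC]
  · intro f g
    simp [convP, delD, eC, dC]
  · intro f
    refine ⟨by simp [xiL, eC, dC], ?_⟩
    simp only [LinearMap.comp_apply, xiL, eC, dC, LinearMap.add_apply,
      LinearMap.smulRight_apply, LinearMap.fst_apply, LinearMap.snd_apply,
      map_add, map_smul, zero_smul, one_smul, zero_add, add_comm]
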